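/- The bracket operations [d_n,d_m]=(m-n)d_{n+m}+δ_{n,-m}(n³-n)/12·C, [d_n,I_m]=m·I_{m+n}+δ_{n,-m}(n²+n)·C_D, [I_n,I_m]=n·δ_{n,-m}·C_I, with C, C_D, C_I central, define a Lie algebra structure (the Jacobi identity holds) on the vector space with basis {d_n, I_n : n ∈ ℤ} ∪ {C, C_D, C_I}. -/

import Mathlib

/-- Basis of the Heisenberg–Virasoro Lie algebra. -/
inductive HVBasis : Type
  | d : ℤ → HVBasis
  | i : ℤ → HVBasis
  | c : HVBasis
  | cd : HVBasis
  | ci : HVBasis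

/-- The underlying vector space: formal ℂ-linear combinations of the basis. -/
abbrev HV : Type := HVBasis →₀ ℂ

/-- Basis vectors. -/
noncomputable def e (x : HVBasis) : HV := Finsupp.single x 1

/-- The bracket on basis elements. -/
noncomputable def bb : HVBasis → HVBasis → HV
  | .d n, .d m => ((m : ℂ) - (n : ℂ)) • e (.d (n + m)) +
      (if n = -m then ((n ^ 3 - n : ℤ) : ℂ) / 12 else 0) • e .c
  | .d n, .i m => (m : ℂ) • e (.i (m + n)) +
      (if n = -m then ((n ^ 2 + n : ℤ) : ℂ) else 0) • e .cd
  | .i n, .d m => -((n : ℂ) • e (.i (n + m)) +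
      (if m = -n then ((m ^ 2 + m : ℤ) : ℂ) else 0) • e .cd)
  | .i n, .i m => (if n = -m then (n : ℂ) else 0) • e .ci
  | _, _ => 0

/-- The bracket extended bilinearly to all of HV. -/
noncomputable def br (x y : HV) : HV :=
  x.sum fun i a => y.sum fun j b => (a * b) • bb i j

lemma br_zero_left (y : HV) : br 0 y = 0 := Finsupp.sum_zero_index

lemma br_zero_right (x : HV) : br x 0 = 0 := by
  simp [br, Finsupp.sum_zero_index]

lemma br_add_left (x x' y : HV) : br (x + x') y = br x y + br x' y := by
  refine Finsupp.sum_add_index' (fun i => ?_) (fun i a b => ?_)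
  · simp
  · rw [← Finsupp.sum_add]
    congr 1; ext j c; rw [add_mul, add_smul]

lemma br_add_right (x y y' : HV) : br x (y + y') = br x y + br x y' := by
  rw [br, br, br, ← Finsupp.sum_add]
  refine Finset.sum_congr rfl fun i _ => ?_
  refine Finsupp.sum_add_index' (fun j => ?_) (fun j b c => ?_)
  · simp
  · rw [mul_add, add_smul]

lemma br_single_left (i : HVBasis) (a : ℂ) (y : HV) :
    br (Finsupp.single i a) y = a • br (e i) y := by
  rw [br, br, e, Finsupp.sum_single_index, Finsupp.sum_single_index, Finsupp.smul_sum]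
  · congr 1; ext j b; rw [one_mul, smul_smul]
  · simp
  · simp

lemma br_single_right (x : HV) (j : HVBasis) (b : ℂ) :
    br x (Finsupp.single j b) = b • br x (e j) := by
  rw [br, br, Finsupp.smul_sum]
  congr 1; ext i a
  rw [e, Finsupp.sum_single_index (by simp), Finsupp.sum_single_index (by simp),
    mul_one, smul_smul, mul_comm]

lemma br_ee (i j : HVBasis) : br (e i) (e j) = bb i j := by
  simp only [br, e]
  rw [Finsupp.sum_single_index (by simp), Finsupp.sum_single_index (by simp)]
  simp

lemma br_smul_left (a : ℂ) (x y : HV) : br (a • x) y = a • br x y := by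
  induction x using Finsupp.induction_linear with
  | zero => simp [br_zero_left]
  | add f g hf hg => rw [smul_add, br_add_left, br_add_left, hf, hg, smul_add]
  | single i b => rw [Finsupp.smul_single, br_single_left, br_single_left, smul_smul, smul_eq_mul]

lemma br_smul_right (a : ℂ) (x y : HV) : br x (a • y) = a • br x y := by
  induction y using Finsupp.induction_linear with
  | zero => simp [br_zero_right]
  | add f g hf hg => rw [smul_add, br_add_right, br_add_right, hf, hg, smul_add]
  | single j b => rw [Finsupp.smul_single, br_single_right, br_single_right, smul_smul, smul_eq_mul]

lemma br_neg_right (x y : HV) : br x (-y) = - br x y := by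
  rw [← neg_one_smul ℂ y, br_smul_right]; simp

lemma bb_central_left : (∀ j, bb .c j = 0) ∧ (∀ j, bb .cd j = 0) ∧ (∀ j, bb .ci j = 0) :=
  ⟨fun j => by cases j <;> rfl, fun j => by cases j <;> rfl, fun j => by cases j <;> rfl⟩

lemma bb_central_right : (∀ j, bb j .c = 0) ∧ (∀ j, bb j .cd = 0) ∧ (∀ j, bb j .ci = 0) :=
  ⟨fun j => by cases j <;> rfl, fun j => by cases j <;> rfl, fun j => by cases j <;> rfl⟩

lemma bb_skew (i j : HVBasis) : bb i j = - bb j i := by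
  obtain n|n|_|_|_ := i <;> obtain m|m|_|_|_ := j <;>
      simp only [bb, neg_zero, neg_neg] <;> try rfl
  · rcases eq_or_ne n (-m) with h | h
    · subst h
      rw [if_pos rfl, if_pos (by omega)]
      push_cast
      ring_nf
      module
    · rw [if_neg h, if_neg (by omega), show m + n = n + m from add_comm m n]
      module
  · rcases eq_or_ne n (-m) with h | h
    · subst h
      rw [if_pos rfl, if_pos (by omega)]
      push_cast
      module
    · rw [if_neg h, if_neg (by omega)]
      simp

set_option maxHeartbeats 2000000 in
lemma jac_e (i j k : HVBasis) :
    br (e i) (br (e j) (e k)) + br (e j) (br (e k) (e i)) + br (e k) (br (e i) (e j)) = 0 := by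
  obtain n|n|_|_|_ := i <;> obtain m|m|_|_|_ := j <;> obtain p|p|_|_|_ := k <;>
      simp only [br_ee, bb, br_add_right, br_smul_right, br_neg_right, br_ee,
        bb_central_right.1, bb_central_right.2.1, bb_central_right.2.2,
        bb_central_left.1, bb_central_left.2.1, bb_central_left.2.2,
        br_zero_right, smul_zero, add_zero, zero_add, neg_zero, smul_neg] <;>
    split_ifs <;>
    first
      | (exfalso; omega)
      | (try (have hn : n = -m - p := (by omega)
              subst hn)
         push_cast
         try ring_nf
         module)

lemma add3_zero {A B C D E F : HV} (h1 : A + B + C = 0) (h2 : D + E + F = 0) :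
    (A + D) + (B + E) + (C + F) = 0 := by
  rw [show (A + D) + (B + E) + (C + F) = (A + B + C) + (D + E + F) by abel, h1, h2, add_zero]

lemma jac (x y z : HV) :
    br x (br y z) + br y (br z x) + br z (br x y) = 0 := by
  induction x using Finsupp.induction_linear with
  | zero => simp [br_zero_left, br_zero_right]
  | add f g hf hg =>
    simp only [br_add_left, br_add_right]
    exact add3_zero hf hg
  | single i a =>
    induction y using Finsupp.induction_linear with
    | zero => simp [br_zero_left, br_zero_right]
    | add f g hf hg =>
      simp only [br_add_left, br_add_right]
      exact add3_zero hf hg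
    | single j b =>
      induction z using Finsupp.induction_linear with
      | zero => simp [br_zero_left, br_zero_right]
      | add f g hf hg =>
        simp only [br_add_left, br_add_right]
        exact add3_zero hf hg
      | single k c =>
        simp only [br_single_left, br_single_right, br_smul_left, br_smul_right, smul_smul]
        rw [show a * c * b = c * b * a by ring, show b * a * c = c * b * a by ring,
          ← smul_add, ← smul_add, jac_e, smul_zero]

/-- The bracket is skew-symmetric and satisfies the Jacobi identity, i.e. it
defines a Lie algebra structure on HV. -/
theorem stmt0 :
    (∀ x y : HV, br x y = - br y x) ∧
    (∀ x y z : HV, br x (br y z) + br y (br z x) + br z (br x y) = 0) := by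
  refine ⟨fun x y => ?_, jac⟩
  induction x using Finsupp.induction_linear with
  | zero => simp [br_zero_left, br_zero_right]
  | add f g hf hg => rw [br_add_left, br_add_right, hf, hg, neg_add]
  | single i a =>
    induction y using Finsupp.induction_linear with
    | zero => simp [br_zero_left, br_zero_right]
    | add f g hf hg => rw [br_add_right, br_add_left, hf, hg, neg_add]
    | single j b =>
      rw [br_single_left, br_single_right, br_single_right, br_single_left,
        br_ee, br_ee, bb_skew]
      simp [smul_smul, mul_comm]
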